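/- Let L = L_pure ⊆ ℤⁿ be a pure lattice of rank r with σ = σ_L, and let S be a set of r binomials of I_L. Then S generates I_L if and only if there is a rearrangement {x^{u₁} − x^{v₁}, …, x^{u_r} − x^{v_r}} of S (i.e., an enumeration of S up to sign) such that: (1) {u₁ − v₁, …, u_r − v_r} is a ℤ-basis of L; (2) supp(u_i) ∪ supp(v_i) ⊆ σ for all i ∈ [r]; (3) v₁ = 0 and supp(v_i) ⊆ ⋃_{j=1}^{i−1} supp(u_j) for 2 ≤ i ≤ r. -/

import Mathlib

open MvPolynomial

noncomputable section

/-- The integer vector associated to a natural exponent vector. -/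
def natVec {ι : Type*} (u : ι →₀ ℕ) : ι → ℤ := fun i => (u i : ℤ)

/-- The lattice ideal `I_L` of a lattice `L ⊆ ℤ^ι` in `k[x_i : i ∈ ι]`. -/
def latticeIdeal (k : Type*) [Field k] {ι : Type*} (L : Submodule ℤ (ι → ℤ)) :
    Ideal (MvPolynomial ι k) :=
  Ideal.span {f | ∃ u v : ι →₀ ℕ, natVec u - natVec v ∈ L ∧
    f = monomial u (1 : k) - monomial v 1}

/-- `f` is a binomial `x^u - x^v` belonging to the lattice ideal `I_L`. -/
def IsLatticeBinomial (k : Type*) [Field k] {ι : Type*} (L : Submodule ℤ (ι → ℤ))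
    (f : MvPolynomial ι k) : Prop :=
  ∃ u v : ι →₀ ℕ, natVec u - natVec v ∈ L ∧ f = monomial u (1 : k) - monomial v 1

/-- The `I_L`-fiber of `u` : all exponent vectors `v` with `v - u ∈ L`. -/
def fiber {ι : Type*} (L : Submodule ℤ (ι → ℤ)) (u : ι →₀ ℕ) : Set (ι →₀ ℕ) :=
  {v | natVec v - natVec u ∈ L}

/-- `L⁺ = L ∩ ℕ^ι`. -/
def Lplus {ι : Type*} (L : Submodule ℤ (ι → ℤ)) : Set (ι → ℤ) :=
  {w | w ∈ L ∧ ∀ i, 0 ≤ w i}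

/-- `L_pure`, the subgroup of `L` generated by `L⁺`. -/
def Lpure {ι : Type*} (L : Submodule ℤ (ι → ℤ)) : Submodule ℤ (ι → ℤ) :=
  Submodule.span ℤ (Lplus L)

/-- `σ_L`, the union of the supports of elements of `L⁺`. -/
def sigmaL {ι : Type*} (L : Submodule ℤ (ι → ℤ)) : Set ι :=
  {i | ∃ w ∈ Lplus L, w i ≠ 0}

/-- `F̄ ≤_I Ḡ` : some translate of `F` is contained in `G`. -/
def fiberLE {ι : Type*} (F G : Set (ι →₀ ℕ)) : Prop :=
  ∃ t : ι →₀ ℕ, (fun v => t + v) '' F ⊆ G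

/-- `F ≡_I G` : equivalence of fibers. -/
def fiberEquiv {ι : Type*} (F G : Set (ι →₀ ℕ)) : Prop :=
  fiberLE F G ∧ fiberLE G F

/-- `F̄ <_I Ḡ`. -/
def fiberLT {ι : Type*} (F G : Set (ι →₀ ℕ)) : Prop :=
  fiberLE F G ∧ ¬ fiberEquiv F G

/-- The ideal `I_{<F̄}` generated by binomials of `I_L` whose fiber class is `<_I F̄`. -/
def idealLT (k : Type*) [Field k] {ι : Type*} (L : Submodule ℤ (ι → ℤ))
    (F : Set (ι →₀ ℕ)) : Ideal (MvPolynomial ι k) :=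
  Ideal.span {f | ∃ u v : ι →₀ ℕ, natVec u - natVec v ∈ L ∧
    f = monomial u (1 : k) - monomial v 1 ∧ fiberLT (fiber L u) F}

/-- The ideal `I_{≤F̄}` generated by binomials of `I_L` whose fiber class is `≤_I F̄`. -/
def idealLE (k : Type*) [Field k] {ι : Type*} (L : Submodule ℤ (ι → ℤ))
    (F : Set (ι →₀ ℕ)) : Ideal (MvPolynomial ι k) :=
  Ideal.span {f | ∃ u v : ι →₀ ℕ, natVec u - natVec v ∈ L ∧
    f = monomial u (1 : k) - monomial v 1 ∧ fiberLE (fiber L u) F}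

/-- `μ(I_L)` : the least cardinality of a binomial generating set of `I_L`. -/
def muIdeal (k : Type*) [Field k] {ι : Type*} (L : Submodule ℤ (ι → ℤ)) : ℕ :=
  sInf {m | ∃ S : Finset (MvPolynomial ι k), S.card = m ∧
    (∀ f ∈ S, IsLatticeBinomial k L f) ∧
    Ideal.span (S : Set (MvPolynomial ι k)) = latticeIdeal k L}

/-- A Markov basis of `I_L` : a binomial generating set of least cardinality `μ(I_L)`. -/
def IsMarkovBasis (k : Type*) [Field k] {ι : Type*} (L : Submodule ℤ (ι → ℤ))
    (S : Finset (MvPolynomial ι k)) : Prop :=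
  (∀ f ∈ S, IsLatticeBinomial k L f) ∧
  Ideal.span (S : Set (MvPolynomial ι k)) = latticeIdeal k L ∧
  S.card = muIdeal k L

/-- `u` is an `L`-primitive vector : `u ≠ 0`, `u ∈ L`, and whenever `q • u ∈ L` for
a rational `q`, then `q` is an integer. -/
def IsLPrimitive {ι : Type*} (L : Submodule ℤ (ι → ℤ)) (u : ι → ℤ) : Prop :=
  u ≠ 0 ∧ u ∈ L ∧ ∀ (q : ℚ) (w : ι → ℤ), w ∈ L →
    (∀ i, (w i : ℚ) = q * (u i : ℚ)) → ∃ m : ℤ, q = (m : ℚ)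

/-- Projection onto the coordinates in `σ_L`. -/
def projSigma {n : ℕ} (L : Submodule ℤ (Fin n → ℤ)) :
    (Fin n → ℤ) →ₗ[ℤ] ({i : Fin n // i ∈ sigmaL L} → ℤ) :=
  LinearMap.pi fun j => LinearMap.proj j.1

/-- Projection onto the coordinates outside `σ_L` (giving `u ↦ u^σ`). -/
def projCompl {n : ℕ} (L : Submodule ℤ (Fin n → ℤ)) :
    (Fin n → ℤ) →ₗ[ℤ] ({i : Fin n // i ∉ sigmaL L} → ℤ) :=
  LinearMap.pi fun j => LinearMap.proj j.1

/-- An indispensable binomial: it appears, up to a constant multiple, in every Markov basis. -/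
def IsIndispensableBinomial (k : Type*) [Field k] {ι : Type*} (L : Submodule ℤ (ι → ℤ))
    (f : MvPolynomial ι k) : Prop :=
  ∀ S : Finset (MvPolynomial ι k), IsMarkovBasis k L S → ∃ c : k, c ≠ 0 ∧ c • f ∈ S

/-- An indispensable monomial: every Markov basis contains a binomial having it as a term. -/
def IsIndispensableMonomial (k : Type*) [Field k] {ι : Type*} (L : Submodule ℤ (ι → ℤ))
    (u : ι →₀ ℕ) : Prop :=
  ∀ S : Finset (MvPolynomial ι k), IsMarkovBasis k L S → ∃ f ∈ S, ∃ v : ι →₀ ℕ,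
    f = monomial u (1 : k) - monomial v 1 ∨ f = monomial v (1 : k) - monomial u 1


/-! ### Auxiliary lemmas -/

section Aux

variable {k : Type*} [Field k] {n r : ℕ}

lemma natVec_inj {ι : Type*} {u v : ι →₀ ℕ} (h : natVec u = natVec v) : u = v := by
  ext i
  have := congrFun h i
  simpa [natVec] using this

lemma monomial_finset_sum {ι α : Type*} (s : Finset α) (g : α → (ι →₀ ℕ)) :
    monomial (∑ i ∈ s, g i) (1 : k) = ∏ i ∈ s, monomial (g i) 1 := by
  classical
  induction s using Finset.induction with
  | empty => simp [MvPolynomial.monomial_zero', MvPolynomial.C_1]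
  | insert _ _ h ih =>
      rw [Finset.sum_insert h, Finset.prod_insert h, ← ih, MvPolynomial.monomial_mul, one_mul]

/-- The algebra map to the group algebra of `(Fin n → ℤ) ⧸ L`. -/
def grpHom (k : Type*) [Field k] {n : ℕ} (L : Submodule ℤ (Fin n → ℤ)) :
    MvPolynomial (Fin n) k →ₐ[k] AddMonoidAlgebra k ((Fin n → ℤ) ⧸ L) :=
  aeval fun i => AddMonoidAlgebra.single (Submodule.Quotient.mk (Pi.single i 1)) 1

lemma natVec_eq_sum (u : Fin n →₀ ℕ) :
    natVec u = ∑ i ∈ u.support, (u i : ℤ) • Pi.single i (1 : ℤ) := by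
  funext j
  rw [Finset.sum_apply]
  by_cases hj : j ∈ u.support
  · rw [Finset.sum_eq_single j]
    · simp [natVec]
    · intro b _ hb; simp [Pi.single_apply, hb]
    · intro h; exact absurd hj h
  · have hj0 : u j = 0 := Finsupp.notMem_support_iff.mp hj
    have : ∀ b ∈ u.support, ((u b : ℤ) • (Pi.single b (1:ℤ) : Fin n → ℤ)) j = 0 := by
      intro b hb
      have hbj : b ≠ j := fun h => hj (h ▸ hb)
      simp [Pi.single_apply, hbj]
    rw [Finset.sum_eq_zero this]
    simp [natVec, hj0]

lemma grpHom_monomial (L : Submodule ℤ (Fin n → ℤ)) (u : Fin n →₀ ℕ) :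
    grpHom k L (monomial u 1) =
      AddMonoidAlgebra.single (Submodule.Quotient.mk (natVec u)) 1 := by
  classical
  rw [grpHom, aeval_monomial, map_one, one_mul]
  rw [Finsupp.prod]
  have : ∀ i ∈ u.support,
      (AddMonoidAlgebra.single (R := k) (Submodule.Quotient.mk (p := L) (Pi.single i 1)) 1) ^ (u i)
      = AddMonoidAlgebra.single (Submodule.Quotient.mk ((u i : ℤ) • Pi.single i (1:ℤ))) 1 := by
    intro i _
    rw [AddMonoidAlgebra.single_pow, one_pow]
    rw [← natCast_zsmul, Submodule.Quotient.mk_smul]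
  rw [Finset.prod_congr rfl this]
  have key : ∀ (s : Finset (Fin n)) (g : Fin n → (Fin n → ℤ)),
      ∏ i ∈ s, AddMonoidAlgebra.single (R := k) (Submodule.Quotient.mk (p := L) (g i)) 1
      = AddMonoidAlgebra.single (Submodule.Quotient.mk (∑ i ∈ s, g i)) 1 := by
    intro s g
    induction s using Finset.induction with
    | empty => simp [AddMonoidAlgebra.one_def]
    | insert _ _ h ih =>
        rw [Finset.prod_insert h, ih, AddMonoidAlgebra.single_mul_single, one_mul,
          Finset.sum_insert h, ← Submodule.Quotient.mk_add]
  rw [key]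
  congr 2
  rw [natVec_eq_sum]

lemma grpHom_vanish (L : Submodule ℤ (Fin n → ℤ)) {T : Set (MvPolynomial (Fin n) k)}
    (hT : ∀ f ∈ T, ∃ u v : Fin n →₀ ℕ, natVec u - natVec v ∈ L ∧
      f = monomial u (1 : k) - monomial v 1)
    {f : MvPolynomial (Fin n) k} (hf : f ∈ Ideal.span T) : grpHom k L f = 0 := by
  have : Ideal.span T ≤ RingHom.ker (grpHom k L).toRingHom := by
    rw [Ideal.span_le]
    intro g hg
    obtain ⟨u, v, huv, rfl⟩ := hT g hg
    have : (Submodule.Quotient.mk (natVec u) : (Fin n → ℤ) ⧸ L) =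
        Submodule.Quotient.mk (natVec v) := (Submodule.Quotient.eq L).mpr huv
    simp only [SetLike.mem_coe, RingHom.mem_ker, AlgHom.toRingHom_eq_coe, RingHom.coe_coe]
    rw [map_sub, grpHom_monomial, grpHom_monomial, this, sub_self]
  exact this hf

lemma mem_span_binomials {L : Submodule ℤ (Fin n → ℤ)} {T : Set (MvPolynomial (Fin n) k)}
    (hT : ∀ f ∈ T, ∃ u v : Fin n →₀ ℕ, natVec u - natVec v ∈ L ∧
      f = monomial u (1 : k) - monomial v 1)
    {u v : Fin n →₀ ℕ}
    (h : monomial u (1 : k) - monomial v 1 ∈ Ideal.span T) : natVec u - natVec v ∈ L := by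
  have h0 := grpHom_vanish L hT h
  rw [map_sub, grpHom_monomial, grpHom_monomial, sub_eq_zero] at h0
  have := AddMonoidAlgebra.single_inj.mp h0
  rcases this with ⟨h1, _⟩ | ⟨h1, _⟩
  · exact (Submodule.Quotient.eq L).mp h1
  · exact absurd h1 one_ne_zero

lemma one_not_mem_span_binomials {L : Submodule ℤ (Fin n → ℤ)} {T : Set (MvPolynomial (Fin n) k)}
    (hT : ∀ f ∈ T, ∃ u v : Fin n →₀ ℕ, natVec u - natVec v ∈ L ∧
      f = monomial u (1 : k) - monomial v 1) :
    (1 : MvPolynomial (Fin n) k) ∉ Ideal.span T := by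
  intro h
  have h0 := grpHom_vanish L hT h
  rw [map_one] at h0
  have : (AddMonoidAlgebra.single (0 : (Fin n → ℤ) ⧸ L) (1:k)) = 0 := by
    rw [← AddMonoidAlgebra.one_def]; exact h0
  exact one_ne_zero (AddMonoidAlgebra.single_eq_zero.mp this)

/-- the positive part of an integer vector, as a finsupp -/
def vecPos {n : ℕ} (w : Fin n → ℤ) : Fin n →₀ ℕ :=
  Finsupp.equivFunOnFinite.symm fun j => (w j).toNat

lemma natVec_vecPos_sub (w : Fin n → ℤ) :
    natVec (vecPos w) - natVec (vecPos (-w)) = w := by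
  funext j
  simp only [natVec, vecPos, Pi.sub_apply, Finsupp.equivFunOnFinite_symm_apply_apply]
  simpa using Int.toNat_sub_toNat_neg (w j)

lemma support_subset_sigma {L : Submodule ℤ (Fin n → ℤ)} (hpure : L = Lpure L)
    {w : Fin n → ℤ} (hw : w ∈ L) {j : Fin n} (hj : j ∉ sigmaL L) : w j = 0 := by
  classical
  set K : Submodule ℤ (Fin n → ℤ) :=
    LinearMap.ker (LinearMap.proj (R := ℤ) (φ := fun _ : Fin n => ℤ) j) with hK
  have hsub : Lpure L ≤ K := by
    rw [Lpure, Submodule.span_le]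
    intro x hx
    simp only [hK, SetLike.mem_coe, LinearMap.mem_ker, LinearMap.proj_apply]
    by_contra hxj
    exact hj ⟨x, hx, hxj⟩
  have : w ∈ K := hsub (hpure ▸ hw)
  simpa [hK] using this

lemma finrank_independent {ι : Type*} [Fintype ι] {L : Submodule ℤ (Fin n → ℤ)}
    (w : ι → (Fin n → ℤ)) (hw : ∀ i, w i ∈ L)
    (hspan : Submodule.span ℤ (Set.range w) = L)
    (hr : Module.finrank ℤ L = Fintype.card ι) : LinearIndependent ℤ w := by
  classical
  set w' : ι → L := fun i => ⟨w i, hw i⟩ with hw'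
  have hmap : Submodule.map L.subtype (Submodule.span ℤ (Set.range w'))
      = Submodule.map L.subtype ⊤ := by
    rw [Submodule.map_span, Submodule.map_top, Submodule.range_subtype]
    have himg : ⇑L.subtype '' Set.range w' = Set.range w := by
      ext x
      simp only [Set.mem_image, Set.mem_range]
      constructor
      · rintro ⟨y, ⟨i, rfl⟩, rfl⟩; exact ⟨i, rfl⟩
      · rintro ⟨i, rfl⟩; exact ⟨w' i, ⟨i, rfl⟩, rfl⟩
    rw [himg, hspan]
  have hspan' : Submodule.span ℤ (Set.range w') = ⊤ :=
    Submodule.map_injective_of_injective L.injective_subtype hmap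
  have hfin : Module.Finite ℤ L := Module.Finite.iff_fg.mpr (IsNoetherian.noetherian L)
  have hsurj : Function.Surjective (Finsupp.linearCombination ℤ w') := by
    rw [← LinearMap.range_eq_top, Finsupp.range_linearCombination, hspan']
  let b := Module.finBasis ℤ L
  rw [hr] at b
  let eL : L ≃ₗ[ℤ] (ι →₀ ℤ) := b.repr ≪≫ₗ (Finsupp.domLCongr (Fintype.equivFinOfCardEq rfl).symm)
  let g : (ι →₀ ℤ) →ₗ[ℤ] (ι →₀ ℤ) := eL.toLinearMap ∘ₗ Finsupp.linearCombination ℤ w'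
  have hgsurj : Function.Surjective g := by
    simp only [g, LinearMap.coe_comp]
    exact Function.Surjective.comp eL.surjective hsurj
  have hginj : Function.Injective g :=
    OrzechProperty.injective_of_surjective_endomorphism g hgsurj
  have hinj : Function.Injective (Finsupp.linearCombination ℤ w') := by
    intro x y hxy
    apply hginj
    simp only [g, LinearMap.coe_comp, Function.comp_apply, hxy]
  have hli' : LinearIndependent ℤ w' := by
    rw [linearIndependent_iff_injective_finsuppLinearCombination]
    exact hinj
  exact hli'.map' L.subtype (Submodule.ker_subtype L)

lemma isUnit_finset_prod {M : Type*} [CommMonoid M] {α : Type*} (s : Finset α) (f : α → M)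
    (h : ∀ i ∈ s, IsUnit (f i)) : IsUnit (∏ i ∈ s, f i) := by
  classical
  induction s using Finset.induction with
  | empty => simp
  | insert _ _ hn ih =>
    rw [Finset.prod_insert hn]
    exact (h _ (Finset.mem_insert_self _ _)).mul (ih fun i hi => h i (Finset.mem_insert_of_mem hi))

lemma X_dvd_monomial {u : Fin n →₀ ℕ} {j : Fin n} (hj : u j ≠ 0) :
    monomial u (1 : k) = X j * monomial (u - Finsupp.single j 1) 1 := by
  have hu : Finsupp.single j 1 + (u - Finsupp.single j 1) = u := by
    ext j'
    by_cases hj' : j' = j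
    · subst hj'
      simp only [Finsupp.add_apply, Finsupp.single_eq_same, Finsupp.tsub_apply]
      omega
    · simp only [Finsupp.add_apply, Finsupp.single_eq_of_ne' (Ne.symm hj'), Finsupp.tsub_apply,
        Finsupp.single_eq_of_ne' (Ne.symm hj'), zero_add, Nat.sub_zero]
  rw [X, monomial_mul, one_mul, hu]

lemma isUnit_X_of_isUnit_monomial {J : Ideal (MvPolynomial (Fin n) k)} {u : Fin n →₀ ℕ}
    {j : Fin n} (hj : u j ≠ 0)
    (h : IsUnit (Ideal.Quotient.mk J (monomial u 1))) :
    IsUnit (Ideal.Quotient.mk J (X j)) := by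
  rw [X_dvd_monomial hj, map_mul] at h
  exact isUnit_of_mul_isUnit_left h

lemma isUnit_monomial_of_X {J : Ideal (MvPolynomial (Fin n) k)} {u : Fin n →₀ ℕ}
    (h : ∀ j, u j ≠ 0 → IsUnit (Ideal.Quotient.mk J (X j))) :
    IsUnit (Ideal.Quotient.mk J (monomial u 1)) := by
  rw [monomial_eq, C_1, one_mul, Finsupp.prod, map_prod]
  apply isUnit_finset_prod
  intro j hj
  rw [map_pow]
  exact (h j (Finsupp.mem_support_iff.mp hj)).pow _

/-- Backward direction core: triangularity + span gives the lattice ideal. -/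
theorem span_eq_latticeIdeal (L : Submodule ℤ (Fin n → ℤ)) (u v : Fin r → (Fin n →₀ ℕ))
    (hspan : Submodule.span ℤ (Set.range fun i => natVec (u i) - natVec (v i)) = L)
    (htri : ∀ i : Fin r, ∀ j : Fin n, v i j ≠ 0 → ∃ i' : Fin r, i' < i ∧ u i' j ≠ 0) :
    Ideal.span (Set.range fun i => monomial (u i) (1 : k) - monomial (v i) 1)
      = latticeIdeal k L := by
  classical
  set J := Ideal.span (Set.range fun i => monomial (u i) (1 : k) - monomial (v i) 1) with hJ
  have hvec : ∀ i, natVec (u i) - natVec (v i) ∈ L := by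
    intro i
    rw [← hspan]
    exact Submodule.subset_span ⟨i, rfl⟩
  set Q := Ideal.Quotient.mk J with hQ
  have hmemJ : ∀ i : Fin r, monomial (u i) (1:k) - monomial (v i) 1 ∈ J :=
    fun i => Ideal.subset_span ⟨i, rfl⟩
  have hQuv : ∀ i, Q (monomial (u i) 1) = Q (monomial (v i) 1) :=
    fun i => (Ideal.Quotient.mk_eq_mk_iff_sub_mem _ _).mpr (hmemJ i)
  have hunit : ∀ m : ℕ, ∀ i : Fin r, i.val = m → IsUnit (Q (monomial (u i) 1)) := by
    intro m
    induction m using Nat.strong_induction_on with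
    | _ m ih =>
      intro i him
      rw [hQuv i]
      apply isUnit_monomial_of_X
      intro j hj
      obtain ⟨i', hi', hui'⟩ := htri i j hj
      have : IsUnit (Q (monomial (u i') 1)) := ih i'.val (him ▸ hi') i' rfl
      exact isUnit_X_of_isUnit_monomial hui' this
  have hunitu : ∀ i, IsUnit (Q (monomial (u i) 1)) := fun i => hunit i.val i rfl
  have hunitv : ∀ i, IsUnit (Q (monomial (v i) 1)) := fun i => (hQuv i) ▸ hunitu i
  apply le_antisymm
  · rw [hJ, Ideal.span_le]
    rintro f ⟨i, rfl⟩
    exact Ideal.subset_span ⟨u i, v i, hvec i, rfl⟩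
  · rw [latticeIdeal, Ideal.span_le]
    rintro f ⟨a, b, hab, rfl⟩
    simp only [SetLike.mem_coe]
    rw [← hspan] at hab
    obtain ⟨c, hc⟩ := Submodule.mem_span_range_iff_exists_fun ℤ |>.mp hab
    set M1 : Fin n →₀ ℕ := ∑ i : Fin r, ((-(c i)).toNat • u i + (c i).toNat • v i) with hM1
    set M2 : Fin n →₀ ℕ := ∑ i : Fin r, ((c i).toNat • u i + (-(c i)).toNat • v i) with hM2
    have hcoord : ∀ j, (a j : ℤ) - b j = ∑ i : Fin r, c i * ((u i j : ℤ) - v i j) := by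
      intro j
      have := congrFun hc j
      simp only [Finset.sum_apply, Pi.smul_apply, Pi.sub_apply, smul_eq_mul, natVec] at this
      rw [← this]
    have hkey : a + M1 = b + M2 := by
      ext j
      have hZ : ((a + M1) j : ℤ) = ((b + M2) j : ℤ) := by
        simp only [Finsupp.add_apply, hM1, hM2, Finsupp.finset_sum_apply, Finsupp.smul_apply,
          smul_eq_mul]
        push_cast
        have expand : ∀ i : Fin r,
            (((c i).toNat : ℤ) * u i j + ((-(c i)).toNat : ℤ) * v i j)
            - ((((-(c i)).toNat : ℤ)) * u i j + ((c i).toNat : ℤ) * v i j)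
            = c i * ((u i j : ℤ) - v i j) := by
          intro i
          have h := Int.toNat_sub_toNat_neg (c i)
          linear_combination ((u i j : ℤ) - v i j) * h
        have hsum : (∑ i : Fin r, (((c i).toNat : ℤ) * u i j + ((-(c i)).toNat : ℤ) * v i j))
            - (∑ i : Fin r, ((((-(c i)).toNat : ℤ)) * u i j + ((c i).toNat : ℤ) * v i j))
            = ∑ i : Fin r, c i * ((u i j : ℤ) - v i j) := by
          rw [← Finset.sum_sub_distrib]
          exact Finset.sum_congr rfl fun i _ => expand i
        have := hcoord j
        linarith
      exact_mod_cast hZ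
    have hprod : ∀ (p q : Fin r → ℕ), Q (monomial (∑ i : Fin r, (p i • u i + q i • v i)) 1)
        = ∏ i : Fin r, (Q (monomial (u i) 1)) ^ (p i) * (Q (monomial (v i) 1)) ^ (q i) := by
      intro p q
      rw [monomial_finset_sum, map_prod]
      apply Finset.prod_congr rfl
      intro i _
      have hmm : monomial (p i • u i + q i • v i) (1:k)
          = monomial (p i • u i) 1 * monomial (q i • v i) 1 := by
        rw [monomial_mul, one_mul]
      have h1 : (monomial (p i • u i) (1:k)) = monomial (u i) 1 ^ p i := by
        rw [monomial_pow, one_pow]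
      have h2 : (monomial (q i • v i) (1:k)) = monomial (v i) 1 ^ q i := by
        rw [monomial_pow, one_pow]
      rw [hmm, h1, h2, map_mul, map_pow, map_pow]
    have hM12 : Q (monomial M1 1) = Q (monomial M2 1) := by
      rw [hM1, hM2, hprod, hprod]
      apply Finset.prod_congr rfl
      intro i _
      rw [hQuv i]
      ring
    have hunitM2 : IsUnit (Q (monomial M2 1)) := by
      rw [hM2, hprod]
      apply isUnit_finset_prod
      intro i _
      exact ((hunitu i).pow _).mul ((hunitv i).pow _)
    have hQab : Q (monomial a 1) = Q (monomial b 1) := by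
      have h1 : Q (monomial a 1) * Q (monomial M1 1) = Q (monomial b 1) * Q (monomial M2 1) := by
        rw [← map_mul, ← map_mul, monomial_mul, monomial_mul, one_mul, hkey]
      rw [hM12] at h1
      exact hunitM2.mul_right_cancel h1
    exact (Ideal.Quotient.mk_eq_mk_iff_sub_mem _ _).mp hQab

lemma aeval_ite_monomial (p : Fin n → Prop) [DecidablePred p] (a : Fin n →₀ ℕ) :
    aeval (fun j => if p j then (X j : MvPolynomial (Fin n) k) else 0) (monomial a (1:k))
      = if ∀ j, a j ≠ 0 → p j then monomial a 1 else 0 := by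
  classical
  rw [aeval_monomial, map_one, one_mul, Finsupp.prod]
  by_cases h : ∀ j, a j ≠ 0 → p j
  · rw [if_pos h]
    have : ∀ j ∈ a.support, (if p j then (X j : MvPolynomial (Fin n) k) else 0) ^ (a j)
        = (X j : MvPolynomial (Fin n) k) ^ (a j) := by
      intro j hj
      rw [if_pos (h j (Finsupp.mem_support_iff.mp hj))]
    rw [Finset.prod_congr rfl this, monomial_eq, C_1, one_mul, Finsupp.prod]
  · rw [if_neg h]
    push_neg at h
    obtain ⟨j, hja, hjp⟩ := h
    apply Finset.prod_eq_zero (Finsupp.mem_support_iff.mpr hja)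
    rw [if_neg hjp]
    exact zero_pow hja

lemma binomial_rep {u v a b : Fin n →₀ ℕ}
    (h : monomial u (1:k) - monomial v 1 = monomial a 1 - monomial b 1) :
    natVec u - natVec v = natVec a - natVec b ∨
      natVec u - natVec v = -(natVec a - natVec b) := by
  classical
  by_cases huv : u = v
  · subst huv
    have h0 : monomial a (1:k) = monomial b 1 := by linear_combination -h
    have hab : a = b := by
      by_contra hab
      have hc := congrArg (coeff b) h0
      rw [coeff_monomial, coeff_monomial, if_neg hab, if_pos rfl] at hc
      exact one_ne_zero hc.symm
    left; rw [hab, sub_self, sub_self]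
  · have key : ∀ m : Fin n →₀ ℕ, ((if u = m then (1:k) else 0) - if v = m then 1 else 0)
        = ((if a = m then (1:k) else 0) - if b = m then 1 else 0) := by
      intro m
      have := congrArg (coeff m) h
      simpa [coeff_monomial] using this
    have hvu : ¬ v = u := fun e => huv e.symm
    have huv' : ¬ u = v := huv
    have h1 := key u
    have h2 := key v
    rw [if_pos rfl, if_neg hvu, sub_zero] at h1
    rw [if_pos rfl, if_neg huv', zero_sub] at h2
    by_cases hau : a = u
    · have hbu : ¬ b = u := by
        intro hb
        rw [if_pos hau, if_pos hb, sub_self] at h1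
        exact one_ne_zero h1
      have hav : ¬ a = v := fun e => huv (by rw [← hau, e])
      have hbv : b = v := by
        by_contra hbv
        rw [if_neg hav, if_neg hbv, sub_self] at h2
        exact neg_ne_zero.mpr one_ne_zero h2
      left
      rw [hau, hbv]
    · have hbu : b = u := by
        by_contra hbu
        rw [if_neg hau, if_neg hbu, sub_self] at h1
        exact one_ne_zero h1
      have hbv : ¬ b = v := fun e => huv (by rw [← hbu, e])
      have hav : a = v := by
        by_contra hav
        rw [if_neg hav, if_neg hbv, sub_self] at h2
        exact neg_ne_zero.mpr one_ne_zero h2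
      right
      rw [hav, hbu]
      abel

end Aux

/-! ### Forward direction machinery -/

section Forward

variable {k : Type*} [Field k] {n r : ℕ} {L : Submodule ℤ (Fin n → ℤ)}
  {S : Finset (MvPolynomial (Fin n) k)} {arep brep : {f // f ∈ S} → (Fin n →₀ ℕ)}

lemma span_vecRep_eq
    (hrep : ∀ s : {f // f ∈ S},
      (s : MvPolynomial (Fin n) k) = monomial (arep s) 1 - monomial (brep s) 1)
    (hvec : ∀ s, natVec (arep s) - natVec (brep s) ∈ L)
    (hgen : Ideal.span (S : Set (MvPolynomial (Fin n) k)) = latticeIdeal k L) :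
    Submodule.span ℤ
      (Set.range fun s : {f // f ∈ S} => natVec (arep s) - natVec (brep s)) = L := by
  apply le_antisymm
  · rw [Submodule.span_le]; rintro x ⟨s, rfl⟩; exact hvec s
  · intro w hw
    have hbinL : monomial (vecPos w) (1:k) - monomial (vecPos (-w)) 1 ∈ latticeIdeal k L :=
      Ideal.subset_span ⟨_, _, by rw [natVec_vecPos_sub]; exact hw, rfl⟩
    rw [← hgen] at hbinL
    have := mem_span_binomials (T := (S : Set (MvPolynomial (Fin n) k)))
      (L := Submodule.span ℤ
        (Set.range fun s : {f // f ∈ S} => natVec (arep s) - natVec (brep s)))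
      (fun f hf => ⟨arep ⟨f, hf⟩, brep ⟨f, hf⟩,
        Submodule.subset_span ⟨⟨f, hf⟩, rfl⟩, hrep ⟨f, hf⟩⟩) hbinL
    rwa [natVec_vecPos_sub] at this

lemma forward_support (hpure : L = Lpure L)
    (hrep : ∀ s : {f // f ∈ S},
      (s : MvPolynomial (Fin n) k) = monomial (arep s) 1 - monomial (brep s) 1)
    (hvec : ∀ s, natVec (arep s) - natVec (brep s) ∈ L)
    (hgen : Ideal.span (S : Set (MvPolynomial (Fin n) k)) = latticeIdeal k L)
    (hIndep : LinearIndependent ℤ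
      (fun s : {f // f ∈ S} => natVec (arep s) - natVec (brep s)))
    (s0 : {f // f ∈ S}) (p q : Fin n →₀ ℕ)
    (hs0 : (s0 : MvPolynomial (Fin n) k) = monomial p 1 - monomial q 1 ∨
      (s0 : MvPolynomial (Fin n) k) = monomial q 1 - monomial p 1)
    (hpq : natVec p - natVec q ∈ L)
    {j : Fin n} (hj : j ∉ sigmaL L) : p j = 0 := by
  classical
  by_contra hpj
  have hpqj : (p j : ℤ) = q j := by
    have h0 : (natVec p - natVec q) j = 0 := support_subset_sigma hpure hpq hj
    simpa [natVec, sub_eq_zero] using h0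
  have hqj : q j ≠ 0 := by
    intro hq
    rw [hq] at hpqj
    exact hpj (by exact_mod_cast hpqj)
  set ψ : MvPolynomial (Fin n) k →ₐ[k] MvPolynomial (Fin n) k :=
    aeval (fun j' => if j' ≠ j then X j' else 0) with hψ
  have hψmon : ∀ m : Fin n →₀ ℕ,
      ψ (monomial m 1) = if m j = 0 then monomial m 1 else 0 := by
    intro m
    rw [hψ, aeval_ite_monomial]
    by_cases hm : m j = 0
    · rw [if_pos hm, if_pos]
      intro j' hj' hjj
      exact hj' (by rw [hjj]; exact hm)
    · rw [if_neg hm, if_neg]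
      intro hall
      exact hm (by_contra fun hmj => (hall j hmj) rfl)
  have hLle : latticeIdeal k L ≤ Ideal.span (⇑ψ '' (S : Set (MvPolynomial (Fin n) k))) := by
    rw [latticeIdeal, Ideal.span_le]
    rintro f ⟨c, d, hcd, rfl⟩
    have hcdj : c j = d j := by
      have h0 : (natVec c - natVec d) j = 0 := support_subset_sigma hpure hcd hj
      have : (c j : ℤ) = d j := by simpa [natVec, sub_eq_zero] using h0
      exact_mod_cast this
    set c0 := c.erase j with hc0
    set d0 := d.erase j with hd0
    have hvc : natVec c0 - natVec d0 = natVec c - natVec d := by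
      funext j'
      by_cases hj' : j' = j
      · subst hj'
        simp [natVec, hc0, hd0, Finsupp.erase_same, hcdj]
      · simp [natVec, hc0, hd0, Finsupp.erase_ne hj']
    have h1 : monomial c0 (1:k) - monomial d0 1 ∈ Ideal.span (S : Set (MvPolynomial (Fin n) k)) := by
      rw [hgen]
      exact Ideal.subset_span ⟨c0, d0, hvc ▸ hcd, rfl⟩
    have h2 : ψ (monomial c0 (1:k) - monomial d0 1)
        ∈ Ideal.span (⇑ψ '' (S : Set (MvPolynomial (Fin n) k))) := by
      have := Ideal.mem_map_of_mem ψ h1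
      rwa [Ideal.map_span] at this
    rw [map_sub, hψmon, hψmon, if_pos (Finsupp.erase_same), if_pos (Finsupp.erase_same)] at h2
    have hfact : monomial c (1:k) - monomial d 1
        = monomial (Finsupp.single j (c j)) 1 * (monomial c0 1 - monomial d0 1) := by
      rw [mul_sub, monomial_mul, monomial_mul, one_mul]
      congr 2
      · exact (Finsupp.single_add_erase j c).symm ▸ rfl
      · rw [hcdj]
        exact (Finsupp.single_add_erase j d).symm ▸ rfl
    rw [SetLike.mem_coe, hfact]
    exact Ideal.mul_mem_left _ _ h2
  set V := fun s : {f // f ∈ S} => natVec (arep s) - natVec (brep s) with hV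
  set L'' := Submodule.span ℤ (V '' {s | s ≠ s0}) with hL''
  have hT : ∀ f ∈ ⇑ψ '' (S : Set (MvPolynomial (Fin n) k)),
      ∃ u' v' : Fin n →₀ ℕ, natVec u' - natVec v' ∈ L'' ∧
        f = monomial u' (1:k) - monomial v' 1 := by
    rintro f ⟨g, hg, rfl⟩
    set s : {f // f ∈ S} := ⟨g, hg⟩ with hs
    by_cases hss0 : s = s0
    · have hg0 : ψ g = 0 := by
        have hgs : g = (s0 : MvPolynomial (Fin n) k) := by rw [← hss0]
        rcases hs0 with h | h
        · rw [hgs, h, map_sub, hψmon, hψmon, if_neg hpj, if_neg hqj, sub_zero]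
        · rw [hgs, h, map_sub, hψmon, hψmon, if_neg hpj, if_neg hqj, sub_zero]
      exact ⟨0, 0, by rw [sub_self]; exact Submodule.zero_mem _, by rw [hg0]; simp⟩
    · have hrg : g = monomial (arep s) 1 - monomial (brep s) 1 := hrep s
      have habj : arep s j = brep s j := by
        have h0 : (natVec (arep s) - natVec (brep s)) j = 0 :=
          support_subset_sigma hpure (hvec s) hj
        have : ((arep s) j : ℤ) = (brep s) j := by simpa [natVec, sub_eq_zero] using h0
        exact_mod_cast this
      by_cases hz : arep s j = 0
      · refine ⟨arep s, brep s, Submodule.subset_span ⟨s, hss0, rfl⟩, ?_⟩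
        rw [hrg, map_sub, hψmon, hψmon, if_pos hz, if_pos (habj ▸ hz)]
      · refine ⟨0, 0, by rw [sub_self]; exact Submodule.zero_mem _, ?_⟩
        rw [hrg, map_sub, hψmon, hψmon, if_neg hz, if_neg (habj ▸ hz), sub_zero]
        simp
  have hmem0 : monomial (arep s0) (1:k) - monomial (brep s0) 1 ∈ latticeIdeal k L :=
    Ideal.subset_span ⟨arep s0, brep s0, hvec s0, rfl⟩
  have hfin := mem_span_binomials hT (hLle hmem0)
  exact hIndep.notMem_span_image (by simp : s0 ∉ {s | s ≠ s0}) hfin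

lemma extension_step (hpure : L = Lpure L)
    (hrep : ∀ s : {f // f ∈ S},
      (s : MvPolynomial (Fin n) k) = monomial (arep s) 1 - monomial (brep s) 1)
    (hvec : ∀ s, natVec (arep s) - natVec (brep s) ∈ L)
    (hgen : Ideal.span (S : Set (MvPolynomial (Fin n) k)) = latticeIdeal k L)
    (hIndep : LinearIndependent ℤ
      (fun s : {f // f ∈ S} => natVec (arep s) - natVec (brep s)))
    (hsupp : ∀ s : {f // f ∈ S}, ∀ j, j ∉ sigmaL L → arep s j = 0 ∧ brep s j = 0)
    {t : ℕ} (f : Fin t → {f // f ∈ S}) (u v : Fin t → (Fin n →₀ ℕ))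
    (hori : ∀ i, ((f i : MvPolynomial (Fin n) k) = monomial (u i) 1 - monomial (v i) 1 ∨
      (f i : MvPolynomial (Fin n) k) = monomial (v i) 1 - monomial (u i) 1))
    (hvsup : ∀ i j, v i j ≠ 0 → ∃ i', u i' j ≠ 0)
    (hex : ∃ s : {f // f ∈ S}, s ∉ Set.range f) :
    ∃ s : {f // f ∈ S}, s ∉ Set.range f ∧ ∃ a b : Fin n →₀ ℕ,
      ((s : MvPolynomial (Fin n) k) = monomial a 1 - monomial b 1 ∨
        (s : MvPolynomial (Fin n) k) = monomial b 1 - monomial a 1)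
      ∧ natVec a - natVec b ∈ L ∧ ∀ j, b j ≠ 0 → ∃ i, u i j ≠ 0 := by
  classical
  by_contra hcon
  push_neg at hcon
  set τ : Fin n → Prop := fun j => ∃ i, u i j ≠ 0 with hτ
  set ψ : MvPolynomial (Fin n) k →ₐ[k] MvPolynomial (Fin n) k :=
    aeval (fun j => if τ j then X j else 0) with hψ
  have hψmon : ∀ m : Fin n →₀ ℕ,
      ψ (monomial m (1:k)) = if (∀ j, m j ≠ 0 → τ j) then monomial m 1 else 0 :=
    fun m => aeval_ite_monomial τ m
  set C : Set (MvPolynomial (Fin n) k) :=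
    Set.range fun i : Fin t => monomial (u i) (1:k) - monomial (v i) 1 with hC
  set V := fun s : {f // f ∈ S} => natVec (arep s) - natVec (brep s) with hV
  have hdisj : ∀ i, natVec (u i) - natVec (v i) = V (f i) ∨
      natVec (u i) - natVec (v i) = -(V (f i)) := by
    intro i
    rcases hori i with h | h
    · exact binomial_rep (h.symm.trans (hrep (f i)))
    · rcases binomial_rep (h.symm.trans (hrep (f i))) with h' | h'
      · right
        show natVec (u i) - natVec (v i) = -(natVec (arep (f i)) - natVec (brep (f i)))
        rw [← h', neg_sub]
      · left
        show natVec (u i) - natVec (v i) = natVec (arep (f i)) - natVec (brep (f i))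
        rw [← neg_neg (natVec (arep (f i)) - natVec (brep (f i))), ← h', neg_sub]
  have hvecC : ∀ i, natVec (u i) - natVec (v i) ∈ L := by
    intro i
    rcases hdisj i with h | h
    · rw [h]; exact hvec (f i)
    · rw [h]; exact Submodule.neg_mem _ (hvec (f i))
  have hSC : ∀ g ∈ ⇑ψ '' (S : Set (MvPolynomial (Fin n) k)), g ∈ Ideal.span C := by
    rintro g ⟨g0, hg0, rfl⟩
    set s : {f // f ∈ S} := ⟨g0, hg0⟩ with hsdef
    have hg0s : g0 = (s : MvPolynomial (Fin n) k) := rfl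
    by_cases hs : s ∈ Set.range f
    · obtain ⟨i, hi⟩ := hs
      have husup : ∀ j, u i j ≠ 0 → τ j := fun j hj => ⟨i, hj⟩
      have hvsup' : ∀ j, v i j ≠ 0 → τ j := fun j hj => hvsup i j hj
      rcases hori i with h | h
      · rw [hg0s, ← hi, h, map_sub, hψmon, hψmon, if_pos husup, if_pos hvsup']
        exact Ideal.subset_span ⟨i, rfl⟩
      · rw [hg0s, ← hi, h, map_sub, hψmon, hψmon, if_pos hvsup', if_pos husup]
        rw [show monomial (v i) (1:k) - monomial (u i) 1
          = -(monomial (u i) 1 - monomial (v i) 1) from (neg_sub _ _).symm]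
        exact Submodule.neg_mem _ (Ideal.subset_span ⟨i, rfl⟩)
    · have h1 := hcon s hs (arep s) (brep s) (Or.inl (hrep s)) (hvec s)
      have h2 := hcon s hs (brep s) (arep s) (Or.inr (hrep s))
        (by rw [show natVec (brep s) - natVec (arep s)
              = -(natVec (arep s) - natVec (brep s)) from (neg_sub _ _).symm]
            exact Submodule.neg_mem _ (hvec s))
      obtain ⟨j1, hb1, hu1⟩ := h1
      obtain ⟨j2, hb2, hu2⟩ := h2
      have hg0z : ψ g0 = 0 := by
        rw [hg0s, hrep s, map_sub, hψmon, hψmon, if_neg, if_neg, sub_zero]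
        · intro hall
          obtain ⟨i, hi⟩ := hall j1 hb1
          exact hi (hu1 i)
        · intro hall
          obtain ⟨i, hi⟩ := hall j2 hb2
          exact hi (hu2 i)
      rw [hg0z]
      exact Ideal.zero_mem _
  have hmapC : Ideal.span (⇑ψ '' (S : Set (MvPolynomial (Fin n) k))) ≤ Ideal.span C :=
    Ideal.span_le.mpr hSC
  by_cases hστ : ∀ j ∈ sigmaL L, τ j
  · obtain ⟨s1, hs1⟩ := hex
    have hasup : ∀ j, arep s1 j ≠ 0 → τ j := by
      intro j hj
      apply hστ
      by_contra hjσ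
      exact hj ((hsupp s1 j hjσ).1)
    have hbsup : ∀ j, brep s1 j ≠ 0 → τ j := by
      intro j hj
      apply hστ
      by_contra hjσ
      exact hj ((hsupp s1 j hjσ).2)
    have hb : monomial (arep s1) (1:k) - monomial (brep s1) 1 ∈ Ideal.span C := by
      apply hmapC
      refine Ideal.subset_span ⟨(s1 : MvPolynomial (Fin n) k), s1.2, ?_⟩
      rw [hrep s1, map_sub, hψmon, hψmon, if_pos hasup, if_pos hbsup]
    have hTC : ∀ g ∈ C, ∃ u' v' : Fin n →₀ ℕ,
        natVec u' - natVec v' ∈ Submodule.span ℤ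
          (Set.range fun i : Fin t => natVec (u i) - natVec (v i)) ∧
        g = monomial u' (1:k) - monomial v' 1 := by
      rintro g ⟨i, rfl⟩
      exact ⟨u i, v i, Submodule.subset_span ⟨i, rfl⟩, rfl⟩
    have hw := mem_span_binomials hTC hb
    have hLC : Submodule.span ℤ (Set.range fun i : Fin t => natVec (u i) - natVec (v i))
        ≤ Submodule.span ℤ (V '' {s | s ≠ s1}) := by
      rw [Submodule.span_le]
      rintro x ⟨i, rfl⟩
      have hfi : f i ≠ s1 := fun e => hs1 ⟨i, e⟩
      show natVec (u i) - natVec (v i) ∈ (Submodule.span ℤ (V '' {s | s ≠ s1}) : Set _)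
      rcases hdisj i with h | h
      · rw [h]; exact Submodule.subset_span ⟨f i, hfi, rfl⟩
      · rw [h]; exact Submodule.neg_mem _ (Submodule.subset_span ⟨f i, hfi, rfl⟩)
    exact hIndep.notMem_span_image (by simp : s1 ∉ {s | s ≠ s1}) (hLC hw)
  · push_neg at hστ
    obtain ⟨j0, hj0σ, hj0τ⟩ := hστ
    obtain ⟨w, hwplus, hwj0⟩ := hj0σ
    have hwL : w ∈ L := hwplus.1
    have hwpos : ∀ i, 0 ≤ w i := hwplus.2
    have hwvec : natVec (vecPos w) = w := by
      funext j
      simp [natVec, vecPos, Int.toNat_of_nonneg (hwpos j)]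
    have hzero : natVec (0 : Fin n →₀ ℕ) = 0 := by
      funext j; simp [natVec]
    have hbin : monomial (vecPos w) (1:k) - monomial 0 1 ∈ latticeIdeal k L := by
      refine Ideal.subset_span ⟨vecPos w, 0, ?_, rfl⟩
      rw [hwvec, hzero, sub_zero]
      exact hwL
    have h5 : ψ (monomial (vecPos w) (1:k) - monomial 0 1)
        ∈ Ideal.span (⇑ψ '' (S : Set (MvPolynomial (Fin n) k))) := by
      rw [← hgen] at hbin
      have := Ideal.mem_map_of_mem ψ hbin
      rwa [Ideal.map_span] at this
    have hψval : ψ (monomial (vecPos w) (1:k) - monomial 0 1) = -1 := by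
      rw [map_sub, hψmon, hψmon, if_neg, if_pos]
      · rw [monomial_zero', C_1, zero_sub]
      · intro j hj; simp at hj
      · intro hall
        apply hj0τ
        apply hall j0
        simp only [vecPos, Finsupp.equivFunOnFinite_symm_apply_apply]
        intro hz
        have := Int.toNat_of_nonneg (hwpos j0)
        rw [hz] at this
        exact hwj0 this.symm
    rw [hψval] at h5
    have hone : (1 : MvPolynomial (Fin n) k) ∈ Ideal.span C := by
      have := hmapC h5
      simpa using Submodule.neg_mem _ this
    have hCL : Ideal.span C ≤ latticeIdeal k L := by
      rw [Ideal.span_le]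
      rintro g ⟨i, rfl⟩
      exact Ideal.subset_span ⟨u i, v i, hvecC i, rfl⟩
    exact one_not_mem_span_binomials (L := L) (fun f hf => hf) (hCL hone)

lemma greedy_chain (hpure : L = Lpure L)
    (hrep : ∀ s : {f // f ∈ S},
      (s : MvPolynomial (Fin n) k) = monomial (arep s) 1 - monomial (brep s) 1)
    (hvec : ∀ s, natVec (arep s) - natVec (brep s) ∈ L)
    (hgen : Ideal.span (S : Set (MvPolynomial (Fin n) k)) = latticeIdeal k L)
    (hIndep : LinearIndependent ℤ
      (fun s : {f // f ∈ S} => natVec (arep s) - natVec (brep s)))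
    (hsupp : ∀ s : {f // f ∈ S}, ∀ j, j ∉ sigmaL L → arep s j = 0 ∧ brep s j = 0) :
    ∀ t : ℕ, t ≤ S.card → ∃ (f : Fin t → {f // f ∈ S}) (u v : Fin t → (Fin n →₀ ℕ)),
      Function.Injective f ∧
      (∀ i, ((f i : MvPolynomial (Fin n) k) = monomial (u i) 1 - monomial (v i) 1 ∨
        (f i : MvPolynomial (Fin n) k) = monomial (v i) 1 - monomial (u i) 1)) ∧
      (∀ i j, v i j ≠ 0 → ∃ i', i' < i ∧ u i' j ≠ 0) := by
  intro t
  induction t with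
  | zero =>
      exact fun _ => ⟨Fin.elim0, Fin.elim0, Fin.elim0,
        fun i => i.elim0, fun i => i.elim0, fun i => i.elim0⟩
  | succ t ih =>
      intro ht
      obtain ⟨f, u, v, hinj, hori, htri⟩ := ih (Nat.le_of_succ_le ht)
      have hex : ∃ s : {f // f ∈ S}, s ∉ Set.range f := by
        by_contra hA
        push_neg at hA
        have hsurj : Function.Surjective f := fun s => hA s
        have := Fintype.card_le_of_surjective f hsurj
        rw [Fintype.card_coe, Fintype.card_fin] at this
        omega
      obtain ⟨s, hs, a, b, hab, hvecab, hbsup⟩ :=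
        extension_step hpure hrep hvec hgen hIndep hsupp f u v hori
          (fun i j hj => let ⟨i', _, h⟩ := htri i j hj; ⟨i', h⟩) hex
      refine ⟨Fin.snoc f s, Fin.snoc u a, Fin.snoc v b, ?_, ?_, ?_⟩
      · intro i1 i2 h12
        rcases Fin.eq_castSucc_or_eq_last i1 with ⟨i1', rfl⟩ | rfl <;>
          rcases Fin.eq_castSucc_or_eq_last i2 with ⟨i2', rfl⟩ | rfl
        · simp only [Fin.snoc_castSucc] at h12
          rw [hinj h12]
        · simp only [Fin.snoc_castSucc, Fin.snoc_last] at h12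
          exact absurd ⟨i1', h12⟩ hs
        · simp only [Fin.snoc_castSucc, Fin.snoc_last] at h12
          exact absurd ⟨i2', h12.symm⟩ hs
        · rfl
      · intro i
        refine Fin.lastCases ?_ ?_ i
        · simp only [Fin.snoc_last]
          exact hab
        · intro i0
          simp only [Fin.snoc_castSucc]
          exact hori i0
      · intro i j
        refine Fin.lastCases ?_ ?_ i
        · simp only [Fin.snoc_last]
          intro hbj
          obtain ⟨i', hi'⟩ := hbsup j hbj
          exact ⟨Fin.castSucc i', Fin.castSucc_lt_last i',
            by simpa [Fin.snoc_castSucc] using hi'⟩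
        · intro i0
          simp only [Fin.snoc_castSucc]
          intro hvj
          obtain ⟨i', hlt, hi'⟩ := htri i0 j hvj
          exact ⟨Fin.castSucc i', Fin.castSucc_lt_castSucc_iff.mpr hlt,
            by simpa [Fin.snoc_castSucc] using hi'⟩

end Forward

/-- characterization of the sets of `r` binomials generating the lattice
ideal of a pure lattice `L = L_pure` of rank `r`. -/
theorem stmt12 (k : Type*) [Field k] {n r : ℕ} (L : Submodule ℤ (Fin n → ℤ))
    (hpure : L = Lpure L) (hrank : Module.finrank ℤ ↥L = r)
    (S : Finset (MvPolynomial (Fin n) k)) (hcard : S.card = r)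
    (hbin : ∀ f ∈ S, IsLatticeBinomial k L f) :
    Ideal.span (S : Set (MvPolynomial (Fin n) k)) = latticeIdeal k L ↔
    ∃ u v : Fin r → (Fin n →₀ ℕ),
      (∃ e : Fin r ≃ {f : MvPolynomial (Fin n) k // f ∈ S}, ∀ i : Fin r,
        (e i).1 = monomial (u i) (1 : k) - monomial (v i) 1 ∨
        (e i).1 = monomial (v i) (1 : k) - monomial (u i) 1) ∧
      (LinearIndependent ℤ (fun i : Fin r => natVec (u i) - natVec (v i)) ∧
        Submodule.span ℤ (Set.range fun i : Fin r => natVec (u i) - natVec (v i)) = L) ∧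
      (∀ i : Fin r, {j | u i j ≠ 0} ⊆ sigmaL L ∧ {j | v i j ≠ 0} ⊆ sigmaL L) ∧
      ((∀ h : 0 < r, v ⟨0, h⟩ = 0) ∧
        ∀ i : Fin r, ∀ j : Fin n, v i j ≠ 0 → ∃ i' : Fin r, i' < i ∧ u i' j ≠ 0) := by
  classical
  constructor
  · -- Forward direction
    intro hgen
    have hrepex : ∀ s : {f // f ∈ S}, ∃ a b : Fin n →₀ ℕ,
        natVec a - natVec b ∈ L ∧
        (s : MvPolynomial (Fin n) k) = monomial a 1 - monomial b 1 :=
      fun s => hbin s s.2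
    choose arep brep hvec hrep using hrepex
    have hSpanVec := span_vecRep_eq hrep hvec hgen
    have hIndep : LinearIndependent ℤ
        (fun s : {f // f ∈ S} => natVec (arep s) - natVec (brep s)) := by
      apply finrank_independent _ (fun s => hvec s) hSpanVec
      rw [hrank, Fintype.card_coe, hcard]
    have hsupp : ∀ s : {f // f ∈ S}, ∀ j, j ∉ sigmaL L → arep s j = 0 ∧ brep s j = 0 := by
      intro s j hj
      constructor
      · exact forward_support hpure hrep hvec hgen hIndep s (arep s) (brep s)
          (Or.inl (hrep s)) (hvec s) hj
      · refine forward_support hpure hrep hvec hgen hIndep s (brep s) (arep s)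
          (Or.inr (hrep s)) ?_ hj
        rw [show natVec (brep s) - natVec (arep s)
          = -(natVec (arep s) - natVec (brep s)) from (neg_sub _ _).symm]
        exact Submodule.neg_mem _ (hvec s)
    obtain ⟨f, u, v, hinj, hori, htri⟩ :=
      greedy_chain hpure hrep hvec hgen hIndep hsupp r hcard.symm.le
    have hbij : Function.Bijective f :=
      (Fintype.bijective_iff_injective_and_card f).mpr
        ⟨hinj, by rw [Fintype.card_fin, Fintype.card_coe, hcard]⟩
    set V := fun s : {f // f ∈ S} => natVec (arep s) - natVec (brep s) with hV
    have hdisj : ∀ i, natVec (u i) - natVec (v i) = V (f i) ∨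
        natVec (u i) - natVec (v i) = -(V (f i)) := by
      intro i
      rcases hori i with h | h
      · exact binomial_rep (h.symm.trans (hrep (f i)))
      · rcases binomial_rep (h.symm.trans (hrep (f i))) with h' | h'
        · right
          show natVec (u i) - natVec (v i) = -(natVec (arep (f i)) - natVec (brep (f i)))
          rw [← h', neg_sub]
        · left
          show natVec (u i) - natVec (v i) = natVec (arep (f i)) - natVec (brep (f i))
          rw [← neg_neg (natVec (arep (f i)) - natVec (brep (f i))), ← h', neg_sub]
    have hvecL : ∀ i, natVec (u i) - natVec (v i) ∈ L := by
      intro i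
      rcases hdisj i with h | h
      · rw [h]; exact hvec (f i)
      · rw [h]; exact Submodule.neg_mem _ (hvec (f i))
    refine ⟨u, v, ⟨Equiv.ofBijective f hbij, fun i => hori i⟩, ⟨?_, ?_⟩, ?_, ⟨?_, ?_⟩⟩
    · -- linear independence
      have hcomp : LinearIndependent ℤ (V ∘ f) := hIndep.comp f hinj
      set ε : Fin r → ℤˣ := fun i =>
        if natVec (u i) - natVec (v i) = V (f i) then 1 else -1 with hε
      have hfun : (fun i : Fin r => natVec (u i) - natVec (v i)) = ε • (V ∘ f) := by
        funext i
        show natVec (u i) - natVec (v i) = ε i • (V ∘ f) i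
        by_cases hcase : natVec (u i) - natVec (v i) = V (f i)
        · have hεi : ε i = 1 := if_pos hcase
          rw [hεi, one_smul]
          exact hcase
        · have h2 : natVec (u i) - natVec (v i) = -(V (f i)) :=
            (hdisj i).resolve_left hcase
          have hεi : ε i = -1 := if_neg hcase
          rw [hεi, h2]
          simp [Function.comp]
      rw [hfun]
      exact hcomp.units_smul ε
    · -- span
      apply le_antisymm
      · rw [Submodule.span_le]
        rintro x ⟨i, rfl⟩
        exact hvecL i
      · rw [← hSpanVec, Submodule.span_le]
        rintro x ⟨s, rfl⟩
        obtain ⟨i, rfl⟩ := hbij.2 s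
        show V (f i) ∈ (Submodule.span ℤ
          (Set.range fun i => natVec (u i) - natVec (v i)) : Set _)
        rcases hdisj i with h | h
        · rw [← h]
          exact Submodule.subset_span ⟨i, rfl⟩
        · rw [show V (f i) = -(natVec (u i) - natVec (v i)) by rw [h, neg_neg]]
          exact Submodule.neg_mem _ (Submodule.subset_span ⟨i, rfl⟩)
    · -- supports in sigma
      intro i
      constructor
      · intro j hj
        by_contra hjσ
        exact hj (forward_support hpure hrep hvec hgen hIndep (f i) (u i) (v i)
          (hori i) (hvecL i) hjσ)
      · intro j hj
        by_contra hjσ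
        refine hj (forward_support hpure hrep hvec hgen hIndep (f i) (v i) (u i)
          ((hori i).symm) ?_ hjσ)
        rw [show natVec (v i) - natVec (u i)
          = -(natVec (u i) - natVec (v i)) from (neg_sub _ _).symm]
        exact Submodule.neg_mem _ (hvecL i)
    · -- v 0 = 0
      intro h0
      ext j
      by_contra hj
      obtain ⟨i', hlt, _⟩ := htri ⟨0, h0⟩ j (by simpa using hj)
      exact Nat.not_lt_zero i'.val hlt
    · -- triangularity
      exact fun i j hj => htri i j hj
  · -- Backward direction
    rintro ⟨u, v, ⟨e, he⟩, ⟨_, hspan⟩, _, ⟨_, htri⟩⟩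
    have hcore := span_eq_latticeIdeal (k := k) L u v hspan htri
    have hSset : (S : Set (MvPolynomial (Fin n) k))
        = Set.range (fun i : Fin r => ((e i : {f // f ∈ S}) : MvPolynomial (Fin n) k)) := by
      ext g
      constructor
      · intro hg
        exact ⟨e.symm ⟨g, hg⟩, by simp⟩
      · rintro ⟨i, rfl⟩
        exact (e i).2
    rw [hSset, ← hcore]
    apply le_antisymm
    · rw [Ideal.span_le]
      rintro g ⟨i, rfl⟩
      show ((e i : {f // f ∈ S}) : MvPolynomial (Fin n) k)
        ∈ (Ideal.span (Set.range fun i => monomial (u i) (1:k) - monomial (v i) 1) : Set _)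
      rcases he i with h | h
      · rw [h]
        exact Ideal.subset_span ⟨i, rfl⟩
      · rw [h, show monomial (v i) (1:k) - monomial (u i) 1
          = -(monomial (u i) 1 - monomial (v i) 1) from (neg_sub _ _).symm]
        exact Submodule.neg_mem _ (Ideal.subset_span ⟨i, rfl⟩)
    · rw [Ideal.span_le]
      rintro g ⟨i, rfl⟩
      show (monomial (u i) (1:k) - monomial (v i) 1)
        ∈ (Ideal.span (Set.range fun i : Fin r =>
            ((e i : {f // f ∈ S}) : MvPolynomial (Fin n) k)) : Set _)
      rcases he i with h | h
      · exact Ideal.subset_span ⟨i, h⟩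
      · rw [show monomial (u i) (1:k) - monomial (v i) 1
          = -(((e i : {f // f ∈ S}) : MvPolynomial (Fin n) k)) by rw [h, neg_sub]]
        exact Submodule.neg_mem _ (Ideal.subset_span ⟨i, rfl⟩)
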